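/- Let $s, y \in \mathbb{R}^n$ with $s^T y > 0$ and suppose $s$ and $y$ are linearly independent. Then the function $\gamma \mapsto \alpha^{BB}(\gamma) = \frac{\|s\|^2 - \|y\|^2/\gamma^2 + \sqrt{(\|s\|^2 - \|y\|^2/\gamma^2)^2 + 4(s^Ty)^2/\gamma^2}}{2 s^T y}$ is strictly increasing on $(0, \infty)$. -/
import Mathlib

lemma g_anti (A B c t₁ t₂ : ℝ) (hc : 0 < c) (hB : 0 < B) (hAB : c ^ 2 < A * B)
    (ht2 : 0 < t₂) (h : t₂ < t₁) :
    A - B * t₁ + Real.sqrt ((A - B * t₁) ^ 2 + 4 * c ^ 2 * t₁) <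
    A - B * t₂ + Real.sqrt ((A - B * t₂) ^ 2 + 4 * c ^ 2 * t₂) := by
  set Q₂ : ℝ := (A - B * t₂) ^ 2 + 4 * c ^ 2 * t₂ with hQ2
  have hQ2pos : 0 < Q₂ := by positivity
  set L : ℝ := 2 * c ^ 2 - A * B + B ^ 2 * t₂ with hL
  have key : L < B * Real.sqrt Q₂ := by
    have h0 : B ^ 2 * Q₂ - L ^ 2 = 4 * c ^ 2 * (A * B - c ^ 2) := by rw [hQ2, hL]; ring
    have hpos : 0 < 4 * c ^ 2 * (A * B - c ^ 2) := by
      apply mul_pos (by positivity); linarith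
    have h1 : L ^ 2 < B ^ 2 * Q₂ := by linarith
    have h2 : L ≤ Real.sqrt (L ^ 2) := by
      rw [Real.sqrt_sq_eq_abs]; exact le_abs_self L
    have h3 : Real.sqrt (L ^ 2) < Real.sqrt (B ^ 2 * Q₂) :=
      Real.sqrt_lt_sqrt (sq_nonneg L) h1
    have h4 : Real.sqrt (B ^ 2 * Q₂) = B * Real.sqrt Q₂ := by
      rw [Real.sqrt_mul (sq_nonneg B), Real.sqrt_sq hB.le]
    linarith
  have hd : 0 < t₁ - t₂ := by linarith
  have hrhs : 0 < B * (t₁ - t₂) + Real.sqrt Q₂ := by positivity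
  have main : Real.sqrt ((A - B * t₁) ^ 2 + 4 * c ^ 2 * t₁) <
      B * (t₁ - t₂) + Real.sqrt Q₂ := by
    rw [Real.sqrt_lt' hrhs]
    have hsq : Real.sqrt Q₂ ^ 2 = Q₂ := Real.sq_sqrt hQ2pos.le
    have h5 : 2 * (t₁ - t₂) * L < 2 * (t₁ - t₂) * (B * Real.sqrt Q₂) :=
      mul_lt_mul_of_pos_left key (by linarith)
    nlinarith [hsq, h5]
  linarith

theorem stmt_3 (n : ℕ) (s y : Fin n → ℝ) (hsy : 0 < ∑ i, s i * y i)
    (hind : LinearIndependent ℝ ![s, y]) :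
    let c : ℝ := ∑ i, s i * y i
    StrictMonoOn (fun γ : ℝ => ((∑ i, s i ^ 2) - (∑ i, y i ^ 2) / γ ^ 2 +
      Real.sqrt (((∑ i, s i ^ 2) - (∑ i, y i ^ 2) / γ ^ 2) ^ 2 + 4 * c ^ 2 / γ ^ 2)) / (2 * c))
      (Set.Ioi 0) := by
  intro c
  have hcdef : c = ∑ i, s i * y i := rfl
  set A : ℝ := ∑ i, s i ^ 2 with hA
  set B : ℝ := ∑ i, y i ^ 2 with hB'
  have hc : 0 < c := hsy
  rw [LinearIndependent.pair_iff] at hind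
  have hBnn : 0 ≤ B := Finset.sum_nonneg fun i _ => sq_nonneg _
  have hB : 0 < B := by
    rcases hBnn.lt_or_eq with h | h
    · exact h
    · exfalso
      have hy0 : y = 0 := by
        funext i
        have := (Finset.sum_eq_zero_iff_of_nonneg (fun i _ => sq_nonneg (y i))).mp h.symm
          i (Finset.mem_univ i)
        exact (pow_eq_zero_iff two_ne_zero).mp this
      have := (hind 0 1 (by simp [hy0])).2
      norm_num at this
  have hAB : c ^ 2 < A * B := by
    have hne : ∃ i, s i - (c / B) * y i ≠ 0 := by
      by_contra hcon
      push_neg at hcon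
      have hz : (1 : ℝ) • s + (-(c / B)) • y = 0 := by
        funext i
        have := hcon i
        simp only [Pi.add_apply, Pi.smul_apply, smul_eq_mul, Pi.zero_apply]
        nlinarith [hcon i]
      have := (hind 1 (-(c / B)) hz).1
      norm_num at this
    obtain ⟨i, hi⟩ := hne
    have hipos : 0 < (s i - (c / B) * y i) ^ 2 := by positivity
    have hsum : 0 < ∑ j, (s j - (c / B) * y j) ^ 2 :=
      Finset.sum_pos' (fun j _ => sq_nonneg _) ⟨i, Finset.mem_univ i, hipos⟩
    have expand : ∑ j, (s j - (c / B) * y j) ^ 2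
        = A - 2 * (c / B) * (∑ j, s j * y j) + (c / B) ^ 2 * B := by
      rw [hA, hB', Finset.mul_sum, Finset.mul_sum, ← Finset.sum_sub_distrib,
        ← Finset.sum_add_distrib]
      exact Finset.sum_congr rfl fun j _ => by ring
    rw [expand, ← hcdef] at hsum
    have hd2 : (c / B) ^ 2 * B ^ 2 = c ^ 2 := by field_simp
    have hd1 : (c / B) * B = c := div_mul_cancel₀ c hB.ne'
    nlinarith [mul_pos hsum hB, hd1, hd2]
  intro γ₁ hγ₁ γ₂ hγ₂ h12
  simp only
  have hγ1 : (0:ℝ) < γ₁ := hγ₁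
  have hγ2 : (0:ℝ) < γ₂ := hγ₂
  have ht : (1:ℝ) / γ₂ ^ 2 < 1 / γ₁ ^ 2 :=
    one_div_lt_one_div_of_lt (by positivity) (by nlinarith : γ₁ ^ 2 < γ₂ ^ 2)
  have ht2 : 0 < 1 / γ₂ ^ 2 := by positivity
  have key := g_anti A B c (1 / γ₁ ^ 2) (1 / γ₂ ^ 2) hc hB hAB ht2 ht
  have e1 : B * (1 / γ₁ ^ 2) = B / γ₁ ^ 2 := by ring
  have e2 : B * (1 / γ₂ ^ 2) = B / γ₂ ^ 2 := by ring
  have e3 : 4 * c ^ 2 * (1 / γ₁ ^ 2) = 4 * c ^ 2 / γ₁ ^ 2 := by ring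
  have e4 : 4 * c ^ 2 * (1 / γ₂ ^ 2) = 4 * c ^ 2 / γ₂ ^ 2 := by ring
  rw [e1, e2, e3, e4] at key
  exact (div_lt_div_iff_of_pos_right (by positivity)).mpr key
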